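/- Knuth's Rotation/Reflection Law: for all integers n and k, (-1)^(k+[k>0])·⌊-n choose k-1⌉ = (-1)^(n+[n>0])·⌊-k choose n-1⌉, where [P] denotes 1 if the condition P holds and 0 otherwise (Iverson bracket). -/

import Mathlib

/-- Roman factorial of an integer, as a rational number. -/
def romanFactorial (n : ℤ) : ℚ :=
  if 0 ≤ n then (n.toNat.factorial : ℚ)
  else (-1 : ℚ) ^ (n + 1) / ((-n - 1).toNat.factorial : ℚ)

/-- Roman coefficient of two integers. -/
def romanCoeff (n k : ℤ) : ℚ :=
  romanFactorial n / (romanFactorial k * romanFactorial (n - k))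

lemma negone_zpow_neg (a : ℤ) : (-1 : ℚ) ^ (-a) = (-1 : ℚ) ^ a := by
  rw [zpow_neg, inv_eq_of_mul_eq_one_left]
  rw [← mul_zpow]; norm_num

lemma romanFactorial_ne_zero (m : ℤ) : romanFactorial m ≠ 0 := by
  unfold romanFactorial
  split
  · exact_mod_cast (Nat.factorial_pos _).ne'
  · apply div_ne_zero
    · exact zpow_ne_zero _ (by norm_num)
    · exact_mod_cast (Nat.factorial_pos _).ne'

lemma romanFactorial_key (m : ℤ) :
    romanFactorial (-m) * romanFactorial (m - 1) =
      (-1 : ℚ) ^ (m + (if 0 < m then 1 else 0)) := by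
  by_cases h : 0 < m
  · have h1 : ¬ (0 ≤ -m) := by omega
    have h2 : (0 : ℤ) ≤ m - 1 := by omega
    rw [if_pos h]
    unfold romanFactorial
    rw [if_neg h1, if_pos h2]
    have hne : ((m - 1).toNat.factorial : ℚ) ≠ 0 := by
      exact_mod_cast (Nat.factorial_pos _).ne'
    have : (-(-m) - 1) = m - 1 := by omega
    rw [this]
    field_simp
    rw [show -m + 1 = -(m - 1) by ring, negone_zpow_neg,
        show m + 1 = (m - 1) + 2 by ring, zpow_add₀ (by norm_num : (-1:ℚ) ≠ 0)]
    norm_num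
  · have h1 : (0 : ℤ) ≤ -m := by omega
    have h2 : ¬ (0 : ℤ) ≤ m - 1 := by omega
    rw [if_neg h]
    unfold romanFactorial
    rw [if_pos h1, if_neg h2]
    have : (-(m - 1) - 1) = -m := by omega
    rw [this, show m - 1 + 1 = m by omega]
    have hne : ((-m).toNat.factorial : ℚ) ≠ 0 := by
      exact_mod_cast (Nat.factorial_pos _).ne'
    field_simp
    rw [add_zero]

/-- Knuth's rotation/reflection law:
`(-1)^(k+[k>0]) ⌊-n choose k-1⌉ = (-1)^(n+[n>0]) ⌊-k choose n-1⌉`. -/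
theorem romanCoeff_rotation_reflection (n k : ℤ) :
    (-1 : ℚ) ^ (k + (if 0 < k then 1 else 0)) * romanCoeff (-n) (k - 1) =
      (-1 : ℚ) ^ (n + (if 0 < n then 1 else 0)) * romanCoeff (-k) (n - 1) := by
  rw [← romanFactorial_key k, ← romanFactorial_key n]
  unfold romanCoeff
  rw [show -n - (k - 1) = -k - (n - 1) by omega]
  field_simp [romanFactorial_ne_zero]
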